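/- (Case k = 2.) For every entire function f : ℂ → ℂ and every m ∈ ℕ, the scalar Lisbon integral φ_m(s, p) := (1/2πi) ∮_{|ζ|=R} f(ζ) ζ^m dζ / (ζ² − sζ + p) (with R > 0 such that both roots of ζ² − sζ + p lie in {|ζ| < R}) is annihilated by the operator Θ := ∂²/∂s² + s·∂²/∂s∂p + p·∂²/∂p² + 2·∂/∂p, i.e. ∂²φ_m/∂s² + s·∂²φ_m/∂s∂p + p·∂²φ_m/∂p² + 2·∂φ_m/∂p = 0 on ℂ². -/

import Mathlib

open Complex

noncomputable section

/-- Partial derivative in the first coordinate (`∂/∂s`) for functions on `ℂ² = ℂ × ℂ`. -/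
def pds (F : ℂ × ℂ → ℂ) (x : ℂ × ℂ) : ℂ := fderiv ℂ F x (1, 0)

/-- Partial derivative in the second coordinate (`∂/∂p`) for functions on `ℂ² = ℂ × ℂ`. -/
def pdp (F : ℂ × ℂ → ℂ) (x : ℂ × ℂ) : ℂ := fderiv ℂ F x (0, 1)


lemma root_bound {s p z : ℂ} (h : z ^ 2 - s * z + p = 0) :
    ‖z‖ ≤ max 1 (‖s‖ + ‖p‖) := by
  rcases le_or_gt (‖z‖) 1 with h1 | h1
  · exact le_max_of_le_left h1
  · refine le_max_of_le_right ?_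
    have hz : z ^ 2 = s * z - p := by linear_combination h
    have h2 : ‖z‖ ^ 2 ≤ ‖s‖ * ‖z‖ + ‖p‖ := by
      calc ‖z‖ ^ 2 = ‖z ^ 2‖ := by rw [norm_pow]
        _ = ‖s * z - p‖ := by rw [hz]
        _ ≤ ‖s * z‖ + ‖p‖ := by
            simpa [sub_eq_add_neg] using norm_add_le (s * z) (-p)
        _ = ‖s‖ * ‖z‖ + ‖p‖ := by rw [norm_mul]
    nlinarith [norm_nonneg p, norm_nonneg s]

lemma quad_factor (s p : ℂ) : ∃ α β : ℂ, ∀ z : ℂ, z ^ 2 - s * z + p = (z - α) * (z - β) := by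
  obtain ⟨w, hw⟩ := IsAlgClosed.exists_pow_nat_eq (s ^ 2 - 4 * p) (n := 2) (by norm_num)
  refine ⟨(s + w) / 2, (s - w) / 2, fun z => ?_⟩
  linear_combination ((1:ℂ)/4) * hw

lemma quad_lower {s p : ℂ} {r R : ℝ}
    (hroot : ∀ z : ℂ, z ^ 2 - s * z + p = 0 → ‖z‖ ≤ r)
    (hR : r + 1 ≤ R) {ζ : ℂ} (hζ : ‖ζ‖ = R) :
    1 ≤ ‖ζ ^ 2 - s * ζ + p‖ := by
  obtain ⟨α, β, hfac⟩ := quad_factor s p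
  have hα : ‖α‖ ≤ r := hroot α (by rw [hfac]; ring)
  have hβ : ‖β‖ ≤ r := hroot β (by rw [hfac]; ring)
  have h1 : (1 : ℝ) ≤ ‖ζ - α‖ := by
    have := norm_sub_norm_le ζ α; linarith
  have h2 : (1 : ℝ) ≤ ‖ζ - β‖ := by
    have := norm_sub_norm_le ζ β; linarith
  calc (1:ℝ) = 1 * 1 := by ring
    _ ≤ ‖ζ - α‖ * ‖ζ - β‖ := by
        exact mul_le_mul h1 h2 (by norm_num) (by linarith)
    _ = ‖ζ ^ 2 - s * ζ + p‖ := by rw [← norm_mul, ← hfac]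

/-- The linear map `(u,v) ↦ z*u - v`, the derivative of `x ↦ -(ζ² - x.1 ζ + x.2)`. -/
def lmapC (z : ℂ) : ℂ × ℂ →L[ℂ] ℂ :=
  z • ContinuousLinearMap.fst ℂ ℂ ℂ - ContinuousLinearMap.snd ℂ ℂ ℂ

lemma lmapC_apply (z : ℂ) (v : ℂ × ℂ) : lmapC z v = z * v.1 - v.2 := by
  simp [lmapC]

lemma lmapC_norm (z : ℂ) : ‖lmapC z‖ ≤ ‖z‖ + 1 := by
  refine ContinuousLinearMap.opNorm_le_bound _ (by positivity) fun v => ?_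
  rw [lmapC_apply]
  have h1 : ‖v.1‖ ≤ ‖v‖ := norm_fst_le v
  have h2 : ‖v.2‖ ≤ ‖v‖ := norm_snd_le v
  calc ‖z * v.1 - v.2‖ ≤ ‖z * v.1‖ + ‖v.2‖ := norm_sub_le _ _
    _ = ‖z‖ * ‖v.1‖ + ‖v.2‖ := by rw [norm_mul]
    _ ≤ (‖z‖ + 1) * ‖v‖ := by
        have := norm_nonneg z
        nlinarith

lemma lmapC_cont : Continuous lmapC :=
  (continuous_id.smul continuous_const).sub continuous_const

def keyF (f : ℂ → ℂ) (R : ℝ) (n e : ℕ) (x : ℂ × ℂ) (θ : ℝ) : ℂ :=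
  circleMap 0 R θ * Complex.I * (f (circleMap 0 R θ) * circleMap 0 R θ ^ e) /
    (circleMap 0 R θ ^ 2 - x.1 * circleMap 0 R θ + x.2) ^ (n + 1)

def keyF' (f : ℂ → ℂ) (R : ℝ) (n e : ℕ) (x : ℂ × ℂ) (θ : ℝ) : ℂ × ℂ →L[ℂ] ℂ :=
  (circleMap 0 R θ * Complex.I * (f (circleMap 0 R θ) * circleMap 0 R θ ^ e) * (n + 1) /
      (circleMap 0 R θ ^ 2 - x.1 * circleMap 0 R θ + x.2) ^ (n + 2)) •
    lmapC (circleMap 0 R θ)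

set_option maxHeartbeats 1000000 in
set_option synthInstance.maxHeartbeats 1000000 in
private lemma key (f : ℂ → ℂ) (hf : Continuous f) {R : ℝ} (hR : 0 < R) (n e : ℕ) (x₀ : ℂ × ℂ)
    (hQ : ∀ x ∈ Metric.ball x₀ 1, ∀ ζ : ℂ, ‖ζ‖ = R →
      1 ≤ ‖ζ ^ 2 - x.1 * ζ + x.2‖) :
    HasFDerivAt
      (fun x : ℂ × ℂ => ∮ ζ in C(0, R), f ζ * ζ ^ e / (ζ ^ 2 - x.1 * ζ + x.2) ^ (n + 1))
      (((n + 1 : ℂ) * ∮ ζ in C(0, R), f ζ * ζ ^ (e + 1) / (ζ ^ 2 - x₀.1 * ζ + x₀.2) ^ (n + 2)) •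
          ContinuousLinearMap.fst ℂ ℂ ℂ -
        ((n + 1 : ℂ) * ∮ ζ in C(0, R), f ζ * ζ ^ e / (ζ ^ 2 - x₀.1 * ζ + x₀.2) ^ (n + 2)) •
          ContinuousLinearMap.snd ℂ ℂ ℂ) x₀ := by
  have hcm : Continuous (circleMap 0 R) := continuous_circleMap 0 R
  have habs : ∀ θ : ℝ, ‖circleMap 0 R θ‖ = R := by
    intro θ; rw [norm_circleMap_zero]; exact abs_of_pos hR
  have hsph : ∀ θ : ℝ, circleMap 0 R θ ∈ Metric.sphere (0 : ℂ) R :=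
    circleMap_mem_sphere 0 hR.le
  -- numerator continuity
  have hC : Continuous fun θ => circleMap 0 R θ * Complex.I *
      (f (circleMap 0 R θ) * circleMap 0 R θ ^ e) :=
    (hcm.mul continuous_const).mul ((hf.comp hcm).mul (hcm.pow e))
  -- nonvanishing of the denominator
  have hQne : ∀ x ∈ Metric.ball x₀ 1, ∀ θ : ℝ,
      circleMap 0 R θ ^ 2 - x.1 * circleMap 0 R θ + x.2 ≠ 0 := by
    intro x hx θ
    have := hQ x hx _ (habs θ)
    intro h; rw [h] at this; simp at this; linarith
  -- bound on f on the sphere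
  obtain ⟨M, hM⟩ := (isCompact_sphere (0 : ℂ) R).exists_bound_of_continuousOn hf.continuousOn
  have hM0 : 0 ≤ M := le_trans (norm_nonneg _) (hM _ (hsph 0))
  -- the denominator of F' has abs ≥ 1 on the ball
  have hQge : ∀ x ∈ Metric.ball x₀ 1, ∀ θ : ℝ,
      1 ≤ ‖(circleMap 0 R θ ^ 2 - x.1 * circleMap 0 R θ + x.2) ^ (n + 2)‖ := by
    intro x hx θ
    rw [norm_pow]
    exact one_le_pow₀ (hQ x hx _ (habs θ))
  have main := intervalIntegral.hasFDerivAt_integral_of_dominated_of_fderiv_le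
    (F := keyF f R n e) (F' := keyF' f R n e) (μ := MeasureTheory.volume)
    (a := 0) (b := 2 * Real.pi) (x₀ := x₀)
    (bound := fun _ => R * (M * R ^ e) * (n + 1) * (R + 1)) (Metric.ball_mem_nhds x₀ one_pos)
    ?_ ?_ ?_ ?_ ?_ ?_
  · -- convert `main` to the goal
    have hden2 : Continuous fun θ =>
        (circleMap 0 R θ ^ 2 - x₀.1 * circleMap 0 R θ + x₀.2) ^ (n + 2) :=
      (((hcm.pow 2).sub (continuous_const.mul hcm)).add continuous_const).pow (n + 2)
    have hden2ne : ∀ θ : ℝ,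
        (circleMap 0 R θ ^ 2 - x₀.1 * circleMap 0 R θ + x₀.2) ^ (n + 2) ≠ 0 :=
      fun θ => pow_ne_zero _ (hQne x₀ (Metric.mem_ball_self one_pos) θ)
    have hccont : Continuous fun θ => circleMap 0 R θ * Complex.I *
        (f (circleMap 0 R θ) * circleMap 0 R θ ^ e) * ((n : ℂ) + 1) /
        (circleMap 0 R θ ^ 2 - x₀.1 * circleMap 0 R θ + x₀.2) ^ (n + 2) :=
      (hC.mul continuous_const).div hden2 hden2ne
    have hfun : (fun x : ℂ × ℂ =>
        ∮ ζ in C(0, R), f ζ * ζ ^ e / (ζ ^ 2 - x.1 * ζ + x.2) ^ (n + 1))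
        = fun x => ∫ θ in (0:ℝ)..(2 * Real.pi), keyF f R n e x θ := by
      funext x
      rw [circleIntegral]
      refine intervalIntegral.integral_congr fun θ _ => ?_
      simp only [keyF, deriv_circleMap, smul_eq_mul]
      ring
    have hint' : IntervalIntegrable (keyF' f R n e x₀) MeasureTheory.volume 0 (2 * Real.pi) := by
      refine Continuous.intervalIntegrable ?_ _ _
      exact hccont.smul (lmapC_cont.comp hcm)
    have hg1 : (∫ θ in (0:ℝ)..(2 * Real.pi), circleMap 0 R θ * Complex.I *
          (f (circleMap 0 R θ) * circleMap 0 R θ ^ e) * ((n : ℂ) + 1) /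
          (circleMap 0 R θ ^ 2 - x₀.1 * circleMap 0 R θ + x₀.2) ^ (n + 2) * circleMap 0 R θ)
        = ((n : ℂ) + 1) *
          ∮ ζ in C(0, R), f ζ * ζ ^ (e + 1) / (ζ ^ 2 - x₀.1 * ζ + x₀.2) ^ (n + 2) := by
      rw [circleIntegral, ← intervalIntegral.integral_const_mul]
      refine intervalIntegral.integral_congr fun θ _ => ?_
      simp only [deriv_circleMap, smul_eq_mul]
      ring
    have hg2 : (∫ θ in (0:ℝ)..(2 * Real.pi), circleMap 0 R θ * Complex.I *
          (f (circleMap 0 R θ) * circleMap 0 R θ ^ e) * ((n : ℂ) + 1) /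
          (circleMap 0 R θ ^ 2 - x₀.1 * circleMap 0 R θ + x₀.2) ^ (n + 2))
        = ((n : ℂ) + 1) *
          ∮ ζ in C(0, R), f ζ * ζ ^ e / (ζ ^ 2 - x₀.1 * ζ + x₀.2) ^ (n + 2) := by
      rw [circleIntegral, ← intervalIntegral.integral_const_mul]
      refine intervalIntegral.integral_congr fun θ _ => ?_
      simp only [deriv_circleMap, smul_eq_mul]
      ring
    have hL : (∫ θ in (0:ℝ)..(2 * Real.pi), keyF' f R n e x₀ θ)
        = ((n + 1 : ℂ) *
            ∮ ζ in C(0, R), f ζ * ζ ^ (e + 1) / (ζ ^ 2 - x₀.1 * ζ + x₀.2) ^ (n + 2)) •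
            ContinuousLinearMap.fst ℂ ℂ ℂ -
          ((n + 1 : ℂ) * ∮ ζ in C(0, R), f ζ * ζ ^ e / (ζ ^ 2 - x₀.1 * ζ + x₀.2) ^ (n + 2)) •
            ContinuousLinearMap.snd ℂ ℂ ℂ := by
      refine ContinuousLinearMap.ext fun v => ?_
      rw [ContinuousLinearMap.intervalIntegral_apply hint' v]
      have happ : ∀ θ : ℝ, keyF' f R n e x₀ θ v
          = circleMap 0 R θ * Complex.I *
            (f (circleMap 0 R θ) * circleMap 0 R θ ^ e) * ((n : ℂ) + 1) /
            (circleMap 0 R θ ^ 2 - x₀.1 * circleMap 0 R θ + x₀.2) ^ (n + 2) * circleMap 0 R θ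
              * v.1
            - circleMap 0 R θ * Complex.I *
            (f (circleMap 0 R θ) * circleMap 0 R θ ^ e) * ((n : ℂ) + 1) /
            (circleMap 0 R θ ^ 2 - x₀.1 * circleMap 0 R θ + x₀.2) ^ (n + 2) * v.2 := by
        intro θ
        simp only [keyF', ContinuousLinearMap.smul_apply, lmapC_apply, smul_eq_mul]
        ring
      rw [intervalIntegral.integral_congr fun θ _ => happ θ]
      rw [intervalIntegral.integral_sub ?_ ?_,
        intervalIntegral.integral_mul_const, intervalIntegral.integral_mul_const, hg1, hg2]
      simp only [ContinuousLinearMap.sub_apply, ContinuousLinearMap.smul_apply,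
        ContinuousLinearMap.coe_fst', ContinuousLinearMap.coe_snd', smul_eq_mul]
      · exact ((hccont.mul hcm).mul continuous_const).intervalIntegrable _ _
      · exact (hccont.mul continuous_const).intervalIntegrable _ _
    rw [hfun, ← hL]
    exact main
  · -- hF_meas
    filter_upwards [Metric.ball_mem_nhds x₀ one_pos] with x hx
    refine Continuous.aestronglyMeasurable ?_
    exact hC.div ((((hcm.pow 2).sub (continuous_const.mul hcm)).add continuous_const).pow (n+1))
      (fun θ => pow_ne_zero _ (hQne x hx θ))
  · -- hF_int
    refine Continuous.intervalIntegrable ?_ _ _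
    exact hC.div ((((hcm.pow 2).sub (continuous_const.mul hcm)).add continuous_const).pow (n+1))
      (fun θ => pow_ne_zero _ (hQne x₀ (Metric.mem_ball_self one_pos) θ))
  · -- hF'_meas
    refine Continuous.aestronglyMeasurable ?_
    exact Continuous.smul ((hC.mul continuous_const).div
      ((((hcm.pow 2).sub (continuous_const.mul hcm)).add continuous_const).pow (n+2))
      (fun θ => pow_ne_zero _ (hQne x₀ (Metric.mem_ball_self one_pos) θ))) (lmapC_cont.comp hcm)
  · -- h_bound
    refine MeasureTheory.ae_of_all _ fun θ _ x hx => ?_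
    beta_reduce
    rw [keyF']
    refine le_trans (ContinuousLinearMap.opNorm_smul_le _ _) ?_
    have hlm : ‖lmapC (circleMap 0 R θ)‖ ≤ R + 1 := by
      have := lmapC_norm (circleMap 0 R θ); rw [habs θ] at this; exact this
    have hnum : ‖circleMap 0 R θ * Complex.I * (f (circleMap 0 R θ) * circleMap 0 R θ ^ e) *
        (↑n + 1) / (circleMap 0 R θ ^ 2 - x.1 * circleMap 0 R θ + x.2) ^ (n + 2)‖
        ≤ R * (M * R ^ e) * (n + 1) := by
      rw [norm_div]
      have h1 : ‖circleMap 0 R θ * Complex.I * (f (circleMap 0 R θ) * circleMap 0 R θ ^ e) *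
          ((n : ℂ) + 1)‖ ≤ R * (M * R ^ e) * (n + 1) := by
        rw [norm_mul, norm_mul, norm_mul, norm_mul]
        have e1 : ‖circleMap 0 R θ‖ = R := habs θ
        have e2 : ‖Complex.I‖ = 1 := by simp
        have e3 : ‖circleMap 0 R θ ^ e‖ = R ^ e := by rw [norm_pow, e1]
        have e4 : ‖((n : ℂ) + 1)‖ = (n : ℝ) + 1 := by
          norm_cast
        rw [e1, e2, e3, e4, mul_one]
        gcongr <;> first
          | exact hR.le
          | positivity
          | exact hM _ (hsph θ)
      have h2 : (1:ℝ) ≤ ‖(circleMap 0 R θ ^ 2 - x.1 * circleMap 0 R θ + x.2) ^ (n + 2)‖ :=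
        hQge x hx θ
      calc ‖_‖ / ‖(circleMap 0 R θ ^ 2 - x.1 * circleMap 0 R θ + x.2) ^ (n + 2)‖
          ≤ ‖circleMap 0 R θ * Complex.I * (f (circleMap 0 R θ) * circleMap 0 R θ ^ e) *
            ((n : ℂ) + 1)‖ / 1 :=
            div_le_div_of_nonneg_left (norm_nonneg _) one_pos h2
        _ ≤ R * (M * R ^ e) * (n + 1) := by rw [div_one]; exact h1
    calc _ ≤ (R * (M * R ^ e) * (n + 1)) * (R + 1) := by
          refine mul_le_mul hnum hlm (norm_nonneg _) ?_
          positivity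
      _ = R * (M * R ^ e) * (↑n + 1) * (R + 1) := by ring
  · -- bound integrable
    exact intervalIntegrable_const
  · -- h_diff
    refine MeasureTheory.ae_of_all _ fun θ _ x hx => ?_
    set z := circleMap 0 R θ with hz
    have hQx : z ^ 2 - x.1 * z + x.2 ≠ 0 := hQne x hx θ
    have hpow : (z ^ 2 - x.1 * z + x.2) ^ (n + 1) ≠ 0 := pow_ne_zero _ hQx
    have hQd : HasFDerivAt (fun y : ℂ × ℂ => z ^ 2 - y.1 * z + y.2) (-lmapC z) x := by
      have h3 : HasFDerivAt (fun y : ℂ × ℂ => z ^ 2 + (-lmapC z) y) (-lmapC z) x :=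
        (-lmapC z).hasFDerivAt.const_add (z ^ 2)
      have h4 : (fun y : ℂ × ℂ => z ^ 2 - y.1 * z + y.2)
          = fun y : ℂ × ℂ => z ^ 2 + (-lmapC z) y := by
        funext v
        simp [lmapC]
        ring
      rw [h4]
      exact h3
    have hder : HasDerivAt (fun w : ℂ => z * Complex.I * (f z * z ^ e) / w ^ (n + 1))
        ((0 * (z ^ 2 - x.1 * z + x.2) ^ (n + 1) - z * Complex.I * (f z * z ^ e) *
          (↑(n + 1) * (z ^ 2 - x.1 * z + x.2) ^ (n + 1 - 1))) /
          ((z ^ 2 - x.1 * z + x.2) ^ (n + 1)) ^ 2) (z ^ 2 - x.1 * z + x.2) :=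
      (hasDerivAt_const _ _).div (hasDerivAt_pow (n + 1) _) hpow
    have hcomp := hder.comp_hasFDerivAt x hQd
    convert hcomp using 1
    · rfl
    · rfl
    rw [smul_neg, ← neg_smul]
    rw [keyF']
    rw [← hz]
    congr 1
    simp only [Nat.add_sub_cancel, Nat.cast_add, Nat.cast_one]
    rw [zero_mul, zero_sub, neg_div, neg_neg,
      div_eq_div_iff (pow_ne_zero _ hQx) (pow_ne_zero _ hpow)]
    ring

set_option maxHeartbeats 1600000 in
set_option synthInstance.maxHeartbeats 1000000 in
/-- case `k = 2`: for any entire `f` and any `m ∈ ℕ`, the scalar Lisbon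
integral `φ_m(s,p) = (1/2πi) ∮_{|ζ|=R} f(ζ) ζ^m dζ / (ζ² − sζ + p)` (for any admissible
radius `R`) is annihilated on `ℂ²` by `Θ = ∂²/∂s² + s ∂²/∂s∂p + p ∂²/∂p² + 2 ∂/∂p`. -/
theorem theta_annihilates_scalar_lisbon_integral
    (f : ℂ → ℂ) (hf : Differentiable ℂ f) (m : ℕ) (φ : ℂ × ℂ → ℂ)
    (hφ : ∀ (s p : ℂ) (R : ℝ), 0 < R →
      (∀ z : ℂ, z ^ 2 - s * z + p = 0 → ‖z‖ < R) →
      φ (s, p) = (2 * Real.pi * Complex.I)⁻¹ *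
        ∮ ζ in C(0, R), f ζ * ζ ^ m / (ζ ^ 2 - s * ζ + p)) :
    ∀ x : ℂ × ℂ,
      pds (pds φ) x + x.1 * pds (pdp φ) x + x.2 * pdp (pdp φ) x + 2 * pdp φ x = 0 := by
  intro x
  set c0 : ℂ := (2 * Real.pi * Complex.I)⁻¹ with hc0
  set r : ℝ := ‖x.1‖ + ‖x.2‖ + 5 with hr
  set R : ℝ := r + 2 with hRdef
  have hr1 : (1:ℝ) ≤ r := by
    have := norm_nonneg x.1
    have := norm_nonneg x.2
    simp only [hr]; linarith
  have hR : 0 < R := by simp only [hRdef]; linarith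
  have hx1 : x ∈ Metric.ball x 1 := Metric.mem_ball_self one_pos
  have hx2 : x ∈ Metric.ball x 2 := Metric.mem_ball_self two_pos
  -- root bounds on the ball of radius 2
  have hroot2 : ∀ y ∈ Metric.ball x 2, ∀ z : ℂ, z ^ 2 - y.1 * z + y.2 = 0 →
      ‖z‖ ≤ r := by
    intro y hy z hz
    have h1 := root_bound hz
    have hyx : ‖y - x‖ < 2 := by
      rw [← dist_eq_norm]; exact Metric.mem_ball.mp hy
    have hy1 : ‖y.1 - x.1‖ < 2 :=
      lt_of_le_of_lt (norm_fst_le (y - x)) hyx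
    have hy2 : ‖y.2 - x.2‖ < 2 :=
      lt_of_le_of_lt (norm_snd_le (y - x)) hyx
    have t1 : ‖y.1‖ ≤ ‖x.1‖ + 2 := by
      have := norm_sub_norm_le y.1 x.1; linarith
    have t2 : ‖y.2‖ ≤ ‖x.2‖ + 2 := by
      have := norm_sub_norm_le y.2 x.2; linarith
    refine le_trans h1 (max_le hr1 ?_)
    simp only [hr]; linarith
  have hQ2 : ∀ y ∈ Metric.ball x 2, ∀ ζ : ℂ, ‖ζ‖ = R →
      1 ≤ ‖ζ ^ 2 - y.1 * ζ + y.2‖ :=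
    fun y hy ζ hζ => quad_lower (hroot2 y hy) (by simp only [hRdef]; linarith) hζ
  have hballsub : ∀ y ∈ Metric.ball x 1, Metric.ball y 1 ⊆ Metric.ball x 2 := by
    intro y hy w hw
    rw [Metric.mem_ball] at *
    calc dist w x ≤ dist w y + dist y x := dist_triangle w y x
      _ < 1 + 1 := by gcongr
      _ = 2 := by norm_num
  have keyAt : ∀ (n e : ℕ), ∀ y ∈ Metric.ball x 1,
      HasFDerivAt
        (fun w : ℂ × ℂ => ∮ ζ in C(0, R), f ζ * ζ ^ e / (ζ ^ 2 - w.1 * ζ + w.2) ^ (n + 1))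
        (((n + 1 : ℂ) *
            ∮ ζ in C(0, R), f ζ * ζ ^ (e + 1) / (ζ ^ 2 - y.1 * ζ + y.2) ^ (n + 2)) •
            ContinuousLinearMap.fst ℂ ℂ ℂ -
          ((n + 1 : ℂ) * ∮ ζ in C(0, R), f ζ * ζ ^ e / (ζ ^ 2 - y.1 * ζ + y.2) ^ (n + 2)) •
            ContinuousLinearMap.snd ℂ ℂ ℂ) y :=
    fun n e y hy => key f hf.continuous hR n e y
      (fun w hw ζ hζ => hQ2 w (hballsub y hy hw) ζ hζ)
  -- φ on the ball
  have hφeq : ∀ y ∈ Metric.ball x 1, φ y =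
      c0 * ∮ ζ in C(0, R), f ζ * ζ ^ m / (ζ ^ 2 - y.1 * ζ + y.2) ^ (0 + 1) := by
    intro y hy
    have h := hφ y.1 y.2 R hR (fun z hz =>
      lt_of_le_of_lt (hroot2 y (hballsub y hy (Metric.mem_ball_self one_pos)) z hz)
        (by simp only [hRdef]; linarith))
    rw [Prod.mk.eta] at h
    simp only [zero_add, pow_one]
    exact h
  -- first derivatives on the ball
  have hpds : ∀ y ∈ Metric.ball x 1, pds φ y =
      c0 * ∮ ζ in C(0, R), f ζ * ζ ^ (m + 1) / (ζ ^ 2 - y.1 * ζ + y.2) ^ 2 := by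
    intro y hy
    have hk := (keyAt 0 m y hy).const_mul c0
    have hev : φ =ᶠ[nhds y]
        fun w : ℂ × ℂ => c0 * ∮ ζ in C(0, R), f ζ * ζ ^ m / (ζ ^ 2 - w.1 * ζ + w.2) ^ (0 + 1) := by
      filter_upwards [Metric.isOpen_ball.mem_nhds hy] with w hw using hφeq w hw
    have hd := hk.congr_of_eventuallyEq hev
    rw [pds, hd.fderiv]
    simp only [ContinuousLinearMap.coe_smul', Pi.smul_apply, ContinuousLinearMap.sub_apply,
      ContinuousLinearMap.smul_apply, ContinuousLinearMap.coe_fst', ContinuousLinearMap.coe_snd',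
      smul_eq_mul]
    norm_num
  have hpdp : ∀ y ∈ Metric.ball x 1, pdp φ y =
      -(c0 * ∮ ζ in C(0, R), f ζ * ζ ^ m / (ζ ^ 2 - y.1 * ζ + y.2) ^ 2) := by
    intro y hy
    have hk := (keyAt 0 m y hy).const_mul c0
    have hev : φ =ᶠ[nhds y]
        fun w : ℂ × ℂ => c0 * ∮ ζ in C(0, R), f ζ * ζ ^ m / (ζ ^ 2 - w.1 * ζ + w.2) ^ (0 + 1) := by
      filter_upwards [Metric.isOpen_ball.mem_nhds hy] with w hw using hφeq w hw
    have hd := hk.congr_of_eventuallyEq hev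
    rw [pdp, hd.fderiv]
    simp only [ContinuousLinearMap.coe_smul', Pi.smul_apply, ContinuousLinearMap.sub_apply,
      ContinuousLinearMap.smul_apply, ContinuousLinearMap.coe_fst', ContinuousLinearMap.coe_snd',
      smul_eq_mul]
    norm_num
  -- second derivatives at x
  have hA : pds (pds φ) x =
      c0 * (2 * ∮ ζ in C(0, R), f ζ * ζ ^ (m + 2) / (ζ ^ 2 - x.1 * ζ + x.2) ^ 3) := by
    have hk := (keyAt 1 (m + 1) x hx1).const_mul c0
    have hev : pds φ =ᶠ[nhds x] fun w : ℂ × ℂ =>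
        c0 * ∮ ζ in C(0, R), f ζ * ζ ^ (m + 1) / (ζ ^ 2 - w.1 * ζ + w.2) ^ (1 + 1) := by
      filter_upwards [Metric.isOpen_ball.mem_nhds hx1] with w hw
      rw [hpds w hw]
      try norm_num
    rw [pds, hev.fderiv_eq, hk.fderiv]
    simp only [ContinuousLinearMap.coe_smul', Pi.smul_apply, ContinuousLinearMap.sub_apply,
      ContinuousLinearMap.smul_apply, ContinuousLinearMap.coe_fst', ContinuousLinearMap.coe_snd',
      smul_eq_mul]
    try norm_num [show (1:ℕ)+2 = 3 from rfl, show m+1+1 = m+2 from rfl]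
    try ring
  have hB : pds (pdp φ) x =
      -(c0 * (2 * ∮ ζ in C(0, R), f ζ * ζ ^ (m + 1) / (ζ ^ 2 - x.1 * ζ + x.2) ^ 3)) := by
    have hk := (keyAt 1 m x hx1).const_mul (-c0)
    have hev : pdp φ =ᶠ[nhds x] fun w : ℂ × ℂ =>
        -c0 * ∮ ζ in C(0, R), f ζ * ζ ^ m / (ζ ^ 2 - w.1 * ζ + w.2) ^ (1 + 1) := by
      filter_upwards [Metric.isOpen_ball.mem_nhds hx1] with w hw
      rw [hpdp w hw]
      try norm_num
      try ring
    rw [pds, hev.fderiv_eq, hk.fderiv]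
    simp only [ContinuousLinearMap.coe_smul', Pi.smul_apply, ContinuousLinearMap.sub_apply,
      ContinuousLinearMap.smul_apply, ContinuousLinearMap.coe_fst', ContinuousLinearMap.coe_snd',
      smul_eq_mul]
    try norm_num [show (1:ℕ)+2 = 3 from rfl]
    try ring
  have hCC : pdp (pdp φ) x =
      c0 * (2 * ∮ ζ in C(0, R), f ζ * ζ ^ m / (ζ ^ 2 - x.1 * ζ + x.2) ^ 3) := by
    have hk := (keyAt 1 m x hx1).const_mul (-c0)
    have hev : pdp φ =ᶠ[nhds x] fun w : ℂ × ℂ =>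
        -c0 * ∮ ζ in C(0, R), f ζ * ζ ^ m / (ζ ^ 2 - w.1 * ζ + w.2) ^ (1 + 1) := by
      filter_upwards [Metric.isOpen_ball.mem_nhds hx1] with w hw
      rw [hpdp w hw]
      try norm_num
      try ring
    rw [pdp, hev.fderiv_eq, hk.fderiv]
    simp only [ContinuousLinearMap.coe_smul', Pi.smul_apply, ContinuousLinearMap.sub_apply,
      ContinuousLinearMap.smul_apply, ContinuousLinearMap.coe_fst', ContinuousLinearMap.coe_snd',
      smul_eq_mul]
    try norm_num [show (1:ℕ)+2 = 3 from rfl]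
    try ring
  have hD : pdp φ x =
      -(c0 * ∮ ζ in C(0, R), f ζ * ζ ^ m / (ζ ^ 2 - x.1 * ζ + x.2) ^ 2) := hpdp x hx1
  -- the integral identity
  have hsphabs : ∀ ζ ∈ Metric.sphere (0:ℂ) R, ‖ζ‖ = R := by
    intro ζ hζ
    simpa using hζ
  have hQx : ∀ ζ : ℂ, ‖ζ‖ = R → (ζ ^ 2 - x.1 * ζ + x.2) ≠ 0 := by
    intro ζ hζ h
    have := hQ2 x hx2 ζ hζ
    rw [h] at this; simp at this; linarith
  have hcontOn : ∀ (k : ℕ) (g : ℂ → ℂ), Continuous g →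
      ContinuousOn (fun ζ => g ζ / (ζ ^ 2 - x.1 * ζ + x.2) ^ k) (Metric.sphere 0 R) := by
    intro k g hg
    refine ContinuousOn.div hg.continuousOn
      (Continuous.continuousOn (by continuity)) ?_
    exact fun ζ hζ => pow_ne_zero _ (hQx ζ (hsphabs ζ hζ))
  have hcont : ∀ (k : ℕ) (g : ℂ → ℂ), Continuous g →
      CircleIntegrable (fun ζ => g ζ / (ζ ^ 2 - x.1 * ζ + x.2) ^ k) 0 R :=
    fun k g hg => ContinuousOn.circleIntegrable hR.le (hcontOn k g hg)
  have hcomb : (∮ ζ in C(0, R), f ζ * ζ ^ (m + 2) / (ζ ^ 2 - x.1 * ζ + x.2) ^ 3)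
      = x.1 * (∮ ζ in C(0, R), f ζ * ζ ^ (m + 1) / (ζ ^ 2 - x.1 * ζ + x.2) ^ 3)
        - x.2 * (∮ ζ in C(0, R), f ζ * ζ ^ m / (ζ ^ 2 - x.1 * ζ + x.2) ^ 3)
        + ∮ ζ in C(0, R), f ζ * ζ ^ m / (ζ ^ 2 - x.1 * ζ + x.2) ^ 2 := by
    have h1 : CircleIntegrable
        (fun ζ => x.1 * (f ζ * ζ ^ (m + 1)) / (ζ ^ 2 - x.1 * ζ + x.2) ^ 3) 0 R :=
      hcont 3 _ (continuous_const.mul (hf.continuous.mul (continuous_pow (m + 1))))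
    have h2 : CircleIntegrable
        (fun ζ => x.2 * (f ζ * ζ ^ m) / (ζ ^ 2 - x.1 * ζ + x.2) ^ 3) 0 R :=
      hcont 3 _ (continuous_const.mul (hf.continuous.mul (continuous_pow m)))
    have h3 : CircleIntegrable
        (fun ζ => f ζ * ζ ^ m / (ζ ^ 2 - x.1 * ζ + x.2) ^ 2) 0 R :=
      hcont 2 _ (hf.continuous.mul (continuous_pow m))
    have hstep : (∮ ζ in C(0, R), f ζ * ζ ^ (m + 2) / (ζ ^ 2 - x.1 * ζ + x.2) ^ 3)
        = ∮ ζ in C(0, R),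
            (x.1 * (f ζ * ζ ^ (m + 1)) / (ζ ^ 2 - x.1 * ζ + x.2) ^ 3
              - (x.2 * (f ζ * ζ ^ m) / (ζ ^ 2 - x.1 * ζ + x.2) ^ 3
                - f ζ * ζ ^ m / (ζ ^ 2 - x.1 * ζ + x.2) ^ 2)) := by
      refine circleIntegral.integral_congr hR.le fun ζ hζ => ?_
      have hq := hQx ζ (hsphabs ζ hζ)
      field_simp
      ring
    have h23 : CircleIntegrable
        (fun ζ => x.2 * (f ζ * ζ ^ m) / (ζ ^ 2 - x.1 * ζ + x.2) ^ 3
          - f ζ * ζ ^ m / (ζ ^ 2 - x.1 * ζ + x.2) ^ 2) 0 R := by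
      refine ContinuousOn.circleIntegrable hR.le ?_
      exact (hcontOn 3 _ (continuous_const.mul (hf.continuous.mul
        (continuous_pow m)))).sub (hcontOn 2 _ (hf.continuous.mul (continuous_pow m)))
    rw [hstep, circleIntegral.integral_sub h1 h23, circleIntegral.integral_sub h2 h3]
    have e1 : (∮ ζ in C(0, R), x.1 * (f ζ * ζ ^ (m + 1)) / (ζ ^ 2 - x.1 * ζ + x.2) ^ 3)
        = x.1 * ∮ ζ in C(0, R), f ζ * ζ ^ (m + 1) / (ζ ^ 2 - x.1 * ζ + x.2) ^ 3 := by
      rw [← circleIntegral.integral_const_mul]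
      exact circleIntegral.integral_congr hR.le fun ζ _ => by ring
    have e2 : (∮ ζ in C(0, R), x.2 * (f ζ * ζ ^ m) / (ζ ^ 2 - x.1 * ζ + x.2) ^ 3)
        = x.2 * ∮ ζ in C(0, R), f ζ * ζ ^ m / (ζ ^ 2 - x.1 * ζ + x.2) ^ 3 := by
      rw [← circleIntegral.integral_const_mul]
      exact circleIntegral.integral_congr hR.le fun ζ _ => by ring
    rw [e1, e2]
    ring
  rw [hA, hB, hCC, hD]
  linear_combination (2 * c0) * hcomb
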